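/- arXiv:2410.07685 — 2 statements merged into one kernel-verified Lean document; each statement's English description precedes it below -/
import Mathlib

section
/- For any finite graph G = (V, E) and any subset V' ⊆ V, the resilience of G is at most the resilience of the induced subgraph G \ V' plus |V'|. -/
open SimpleGraph

/-- One step of a disintegration: `D` consists of exactly one vertex from each
connected component of the subgraph of `G` induced on `R`. -/
def DisStep {V : Type*} (G : SimpleGraph V) (R D : Set V) : Prop :=
  ∃ hsub : D ⊆ R,
    (∀ (v w : V) (hv : v ∈ D) (hw : w ∈ D), v ≠ w →
      (G.induce R).connectedComponentMk ⟨v, hsub hv⟩ ≠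
        (G.induce R).connectedComponentMk ⟨w, hsub hw⟩) ∧
    (∀ c : (G.induce R).ConnectedComponent, ∃ (v : V) (hv : v ∈ D),
      (G.induce R).connectedComponentMk ⟨v, hsub hv⟩ = c)

/-- `(D 0, D 1, ..., D (r-1))` is a disintegration of `G`: the steps partition the
vertex set and each step removes exactly one vertex per connected component of what remains. -/
def IsDisintegration {V : Type*} (G : SimpleGraph V) (D : ℕ → Set V) (r : ℕ) : Prop :=
  (∀ i, r ≤ i → D i = ∅) ∧ (⋃ i, D i) = Set.univ ∧
    ∀ i, DisStep G (Set.univ \ ⋃ j < i, D j) (D i)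

/-- The graph resilience: minimal length of a disintegration. -/
noncomputable def resilience {V : Type*} (G : SimpleGraph V) : ℕ :=
  sInf {r | ∃ D, IsDisintegration G D r}

section Helpers
variable {V : Type*} {G : SimpleGraph V}

lemma reach_of_walk {S : Set V} {x y : V} (w : G.Walk x y)
    (hw : ∀ z ∈ w.support, z ∈ S) :
    (G.induce S).Reachable ⟨x, hw x w.start_mem_support⟩ ⟨y, hw y w.end_mem_support⟩ := by
  induction w with
  | nil => exact Reachable.refl _
  | @cons a b c hadj p ih =>
    have hb : b ∈ S := hw b (by simp)
    have h1 : (G.induce S).Adj ⟨a, hw a (Walk.start_mem_support _)⟩ ⟨b, hb⟩ := hadj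
    exact h1.reachable.trans (ih fun z hz => hw z (by simp [hz]))

lemma reach_of_walk' {S : Set V} {x y : V} (w : G.Walk x y)
    (hw : ∀ z ∈ w.support, z ∈ S) (hx : x ∈ S) (hy : y ∈ S) :
    (G.induce S).Reachable ⟨x, hx⟩ ⟨y, hy⟩ := reach_of_walk w hw

lemma exists_walk_of_reach {S : Set V} {a b : ↥S} (h : (G.induce S).Reachable a b) :
    ∃ w : G.Walk a.1 b.1, ∀ z ∈ w.support, z ∈ S := by
  obtain ⟨w⟩ := h
  induction w with
  | @nil u => exact ⟨Walk.nil, by rintro z hz; simp at hz; subst hz; exact u.2⟩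
  | @cons a b c hadj p ih =>
    obtain ⟨w', hw'⟩ := ih
    exact ⟨Walk.cons hadj w', by
      rintro z hz
      replace hz : z ∈ (a.1 :: w'.support) := hz
      rw [List.mem_cons] at hz
      rcases hz with rfl | hz
      · exact a.2
      · exact hw' z hz⟩

lemma support_subset_closed {C : Set V} (hC : ∀ a b, G.Adj a b → a ∈ C → b ∈ C)
    {x y : V} (w : G.Walk x y) : x ∈ C → ∀ z ∈ w.support, z ∈ C := by
  induction w with
  | nil => intro hx z hz; simp at hz; subst hz; exact hx
  | @cons a b c hadj p ih =>
    intro hx z hz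
    rw [Walk.support_cons, List.mem_cons] at hz
    rcases hz with rfl | hz
    · exact hx
    · exact ih (hC _ _ hadj hx) z hz

lemma reach_ambient {S : Set V} {x y : V} {hx : x ∈ S} {hy : y ∈ S}
    (h : (G.induce S).Reachable ⟨x, hx⟩ ⟨y, hy⟩) : G.Reachable x y := by
  obtain ⟨w, -⟩ := exists_walk_of_reach h
  exact ⟨w⟩

lemma reach_mono {S T : Set V} (hST : S ⊆ T) {x y : V} {hx : x ∈ S} {hy : y ∈ S}
    (h : (G.induce S).Reachable ⟨x, hx⟩ ⟨y, hy⟩) :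
    (G.induce T).Reachable ⟨x, hST hx⟩ ⟨y, hST hy⟩ := by
  obtain ⟨w, hw⟩ := exists_walk_of_reach h
  exact reach_of_walk' w (fun z hz => hST (hw z hz)) _ _

lemma reach_closed {S C : Set V} (hC : ∀ a b, G.Adj a b → a ∈ C → b ∈ C)
    {x y : V} {hx : x ∈ S} {hy : y ∈ S} (hxC : x ∈ C)
    (h : (G.induce S).Reachable ⟨x, hx⟩ ⟨y, hy⟩) :
    ∃ hyC : y ∈ C, (G.induce (S ∩ C)).Reachable ⟨x, ⟨hx, hxC⟩⟩ ⟨y, ⟨hy, hyC⟩⟩ := by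
  obtain ⟨w, hw⟩ := exists_walk_of_reach h
  have hsup := support_subset_closed hC w hxC
  exact ⟨hsup y w.end_mem_support,
    reach_of_walk' w (fun z hz => Set.mem_inter (hw z hz) (hsup z hz)) _ _⟩

lemma mem_val_image {A : Set V} {T : Set ↥A} {x : V} :
    x ∈ Subtype.val '' T ↔ ∃ hx : x ∈ A, (⟨x, hx⟩ : ↥A) ∈ T := by
  constructor
  · rintro ⟨⟨a, ha⟩, haT, rfl⟩; exact ⟨ha, haT⟩
  · rintro ⟨hx, h⟩; exact ⟨⟨x, hx⟩, h, rfl⟩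

def isoDoubleInduce (G : SimpleGraph V) (A : Set V) (B : Set ↥A) :
    (G.induce A).induce B ≃g G.induce (Subtype.val '' B) where
  toFun p := ⟨p.1.1, ⟨p.1, p.2, rfl⟩⟩
  invFun q := ⟨⟨q.1, (mem_val_image.mp q.2).choose⟩, (mem_val_image.mp q.2).choose_spec⟩
  left_inv p := Subtype.ext (Subtype.ext rfl)
  right_inv q := Subtype.ext rfl
  map_rel_iff' := Iff.rfl

def DisStep' (G : SimpleGraph V) (R D : Set V) : Prop :=
  ∃ hsub : D ⊆ R,
    (∀ (v w : V) (hv : v ∈ D) (hw : w ∈ D), v ≠ w →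
      ¬ (G.induce R).Reachable ⟨v, hsub hv⟩ ⟨w, hsub hw⟩) ∧
    (∀ (x : V) (hx : x ∈ R), ∃ (v : V) (hv : v ∈ D),
      (G.induce R).Reachable ⟨v, hsub hv⟩ ⟨x, hx⟩)

def IsDisintegration' {V : Type*} (G : SimpleGraph V) (D : ℕ → Set V) (r : ℕ) : Prop :=
  (∀ i, r ≤ i → D i = ∅) ∧ (⋃ i, D i) = Set.univ ∧
    ∀ i, DisStep' G (Set.univ \ ⋃ j < i, D j) (D i)
end Helpers


section Bridge
variable {V : Type*} {G : SimpleGraph V}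

lemma disStep_iff {R D : Set V} : DisStep G R D ↔ DisStep' G R D := by
  constructor
  · rintro ⟨hsub, hinj, hsurj⟩
    refine ⟨hsub, fun v w hv hw hne hreach =>
      hinj v w hv hw hne (ConnectedComponent.sound hreach), fun x hx => ?_⟩
    obtain ⟨v, hv, hc⟩ := hsurj ((G.induce R).connectedComponentMk ⟨x, hx⟩)
    exact ⟨v, hv, ConnectedComponent.exact hc⟩
  · rintro ⟨hsub, hinj, hsurj⟩
    refine ⟨hsub, fun v w hv hw hne heq =>
      hinj v w hv hw hne (ConnectedComponent.exact heq), fun c => ?_⟩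
    obtain ⟨⟨x, hx⟩, rfl⟩ := c.exists_rep
    obtain ⟨v, hv, hr⟩ := hsurj x hx
    exact ⟨v, hv, ConnectedComponent.sound hr⟩

lemma isDis_iff {D : ℕ → Set V} {r : ℕ} :
    IsDisintegration G D r ↔ IsDisintegration' G D r := by
  unfold IsDisintegration IsDisintegration'
  refine and_congr Iff.rfl (and_congr Iff.rfl (forall_congr' fun i => disStep_iff))

def isoInducePreimage {W : Type*} {H : SimpleGraph W} (e : G ≃g H) (R : Set W) :
    G.induce (⇑e ⁻¹' R) ≃g H.induce R where
  toEquiv := e.toEquiv.subtypeEquiv fun _ => Iff.rfl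
  map_rel_iff' := e.map_rel_iff

def isoOfSetEq {S T : Set V} (h : S = T) : G.induce S ≃g G.induce T := by
  subst h; exact Iso.refl

lemma disStep'_map {W : Type*} {H : SimpleGraph W} (e : G ≃g H) {R D : Set W}
    (h : DisStep' H R D) : DisStep' G (⇑e ⁻¹' R) (⇑e ⁻¹' D) := by
  obtain ⟨hsub, hinj, hsurj⟩ := h
  have hsub' : ⇑e ⁻¹' D ⊆ ⇑e ⁻¹' R := fun x hx => hsub hx
  refine ⟨hsub', fun v w hv hw hne hreach => ?_, fun x hx => ?_⟩
  · have : (H.induce R).Reachable ⟨e v, hsub hv⟩ ⟨e w, hsub hw⟩ := by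
      have := (Iso.reachable_iff (φ := isoInducePreimage e R)
        (u := ⟨v, hsub' hv⟩) (v := ⟨w, hsub' hw⟩)).mpr hreach
      exact this
    exact hinj (e v) (e w) hv hw (fun hEq => hne (e.toEquiv.injective hEq)) this
  · obtain ⟨d, hd, hr⟩ := hsurj (e x) hx
    have hdD : e (e.symm d) ∈ D := by rw [e.apply_symm_apply]; exact hd
    refine ⟨e.symm d, hdD, ?_⟩
    have : (H.induce R).Reachable ⟨e (e.symm d), hsub hdD⟩ ⟨e x, hx⟩ := by
      have hde : (⟨e (e.symm d), hsub hdD⟩ : ↥R) = ⟨d, hsub hd⟩ :=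
        Subtype.ext (e.apply_symm_apply d)
      rw [hde]; exact hr
    exact (Iso.reachable_iff (φ := isoInducePreimage e R)
        (u := ⟨e.symm d, hsub' hdD⟩) (v := ⟨x, hx⟩)).mp this

lemma isDis_map {W : Type*} {H : SimpleGraph W} (e : G ≃g H) {D : ℕ → Set W} {r : ℕ}
    (h : IsDisintegration H D r) :
    IsDisintegration G (fun i => ⇑e ⁻¹' D i) r := by
  obtain ⟨h1, h2, h3⟩ := h
  refine ⟨fun i hi => by simp only []; rw [h1 i hi]; simp, ?_, fun i => ?_⟩
  · rw [← Set.preimage_iUnion, h2, Set.preimage_univ]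
  · have hset : (Set.univ \ ⋃ j < i, ⇑e ⁻¹' D j) = ⇑e ⁻¹' (Set.univ \ ⋃ j < i, D j) := by
      ext x; simp
    rw [hset, disStep_iff]
    exact disStep'_map e (disStep_iff.mp (h3 i))

lemma resilience_eq_of_iso {W : Type*} {H : SimpleGraph W} (e : G ≃g H) :
    resilience G = resilience H := by
  unfold resilience
  congr 1
  ext r
  exact ⟨fun ⟨D, hD⟩ => ⟨_, isDis_map e.symm hD⟩, fun ⟨D, hD⟩ => ⟨_, isDis_map e hD⟩⟩
end Bridge

section Exist
noncomputable def pickRep (G : SimpleGraph V) (R : Set V)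
    (c : (G.induce R).ConnectedComponent) : ↥R := c.exists_rep.choose

lemma pickRep_spec (G : SimpleGraph V) (R : Set V) (c : (G.induce R).ConnectedComponent) :
    (G.induce R).connectedComponentMk (pickRep G R c) = c := c.exists_rep.choose_spec

noncomputable def pick (G : SimpleGraph V) (R : Set V) : Set V :=
  Subtype.val '' Set.range (pickRep G R)

lemma pick_subset : pick G R ⊆ R := by
  rintro x ⟨⟨a, ha⟩, -, rfl⟩; exact ha

lemma disStep'_pick (G : SimpleGraph V) (R : Set V) : DisStep' G R (pick G R) := by
  refine ⟨pick_subset, fun v w hv hw hne hreach => ?_, fun x hx => ?_⟩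
  · obtain ⟨⟨a, ha⟩, ⟨c₁, hc₁⟩, hva⟩ := id hv
    obtain ⟨⟨b, hb⟩, ⟨c₂, hc₂⟩, hwb⟩ := id hw
    apply hne
    have h1 : (⟨v, pick_subset hv⟩ : ↥R) = pickRep G R c₁ := by
      rw [hc₁]; exact Subtype.ext hva.symm
    have h2 : (⟨w, pick_subset hw⟩ : ↥R) = pickRep G R c₂ := by
      rw [hc₂]; exact Subtype.ext hwb.symm
    have : c₁ = c₂ := by
      rw [← pickRep_spec G R c₁, ← pickRep_spec G R c₂, ← h1, ← h2]
      exact ConnectedComponent.sound hreach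
    have := h1.trans (this ▸ h2.symm)
    exact congrArg Subtype.val this
  · set c := (G.induce R).connectedComponentMk ⟨x, hx⟩ with hc
    refine ⟨(pickRep G R c).1, ⟨pickRep G R c, ⟨c, rfl⟩, rfl⟩, ?_⟩
    have := pickRep_spec G R c
    have : (G.induce R).connectedComponentMk (pickRep G R c) =
        (G.induce R).connectedComponentMk ⟨x, hx⟩ := this
    exact ConnectedComponent.exact this

lemma pick_nonempty {R : Set V} (h : R.Nonempty) : (pick G R).Nonempty := by
  obtain ⟨x, hx⟩ := h
  obtain ⟨v, hv, -⟩ := (disStep'_pick G R).choose_spec.2 x hx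
  exact ⟨v, hv⟩
end Exist

section
variable {V : Type*} {G : SimpleGraph V}

noncomputable def Rseq (G : SimpleGraph V) : ℕ → Set V
  | 0 => Set.univ
  | n + 1 => Rseq G n \ pick G (Rseq G n)

lemma Rseq_succ_subset (n : ℕ) : Rseq G (n + 1) ⊆ Rseq G n := Set.diff_subset

lemma Rseq_eq (n : ℕ) : Rseq G n = Set.univ \ ⋃ j < n, pick G (Rseq G j) := by
  induction n with
  | zero => simp [Rseq]
  | succ n ih =>
    have hstep : (⋃ j < n + 1, pick G (Rseq G j)) =
        (⋃ j < n, pick G (Rseq G j)) ∪ pick G (Rseq G n) := by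
      ext x; simp [Nat.lt_succ_iff_lt_or_eq]
      constructor
      · rintro ⟨j, hj, hx⟩
        rcases Nat.lt_or_eq_of_le hj with hj | rfl
        · exact Or.inl ⟨j, hj, hx⟩
        · exact Or.inr hx
      · rintro (⟨j, hj, hx⟩ | hx)
        · exact ⟨j, hj.le, hx⟩
        · exact ⟨n, le_rfl, hx⟩
    rw [Rseq, ih, hstep, Set.diff_diff, ← ih]

lemma Rseq_empty [Finite V] (n : ℕ) (hn : Nat.card V ≤ n) : Rseq G n = ∅ := by
  have key : ∀ m, Rseq G m ≠ ∅ → m + (Rseq G m).ncard ≤ Nat.card V := by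
    intro m
    induction m with
    | zero =>
      intro _
      simp only [Rseq, Nat.zero_add]
      rw [Set.ncard_univ]
    | succ m ih =>
      intro hne
      have hm : Rseq G m ≠ ∅ := by
        intro h
        apply hne
        rw [Rseq, h]; simp
      have hlt : (Rseq G (m+1)).ncard < (Rseq G m).ncard := by
        apply Set.ncard_lt_ncard _ (Set.toFinite _)
        constructor
        · exact Rseq_succ_subset m
        · intro hsub
          obtain ⟨x, hx⟩ := pick_nonempty (G := G) (R := Rseq G m)
            (Set.nonempty_iff_ne_empty.mpr hm)
          have hxR : x ∈ Rseq G m := pick_subset hx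
          have := hsub hxR
          rw [Rseq] at this
          exact this.2 hx
      have := ih hm
      omega
  by_contra h
  have := key n h
  have hpos : 0 < (Rseq G n).ncard := by
    rw [Set.ncard_pos (Set.toFinite _)]
    exact Set.nonempty_iff_ne_empty.mpr h
  omega
end

section
variable {V : Type*} {G : SimpleGraph V}


lemma exists_dis' [Finite V] (G : SimpleGraph V) :
    ∃ D, IsDisintegration' G D (Nat.card V) := by
  classical
  refine ⟨fun i => pick G (Rseq G i), ?_, ?_, ?_⟩
  · intro i hi
    simp only []
    have h := pick_subset (G := G) (R := Rseq G i)
    rw [Rseq_empty i hi] at h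
    rw [Rseq_empty i hi]
    exact Set.subset_empty_iff.mp h
  · ext x
    simp only [Set.mem_iUnion, Set.mem_univ, iff_true]
    have hend : x ∉ Rseq G (Nat.card V) := by
      rw [Rseq_empty _ le_rfl]; exact id
    have h0 : x ∈ Rseq G 0 := Set.mem_univ x
    by_contra hnot
    push_neg at hnot
    have : ∀ n, x ∈ Rseq G n := by
      intro n
      induction n with
      | zero => exact h0
      | succ n ih =>
        rw [Rseq]
        exact ⟨ih, hnot n⟩
    exact hend (this _)
  · intro i
    have : (Set.univ \ ⋃ j < i, pick G (Rseq G j)) = Rseq G i := (Rseq_eq i).symm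
    rw [this]
    exact disStep'_pick G (Rseq G i)
end
-- === key step ===
section Key
variable {W : Type*}

lemma key_step (G : SimpleGraph W) (v : W) (A : Set W) (hAdef : A = {v}ᶜ) {r : ℕ}
    {D' : ℕ → Set ↥A} (h : IsDisintegration' (G.induce A) D' r) :
    ∃ D, IsDisintegration' G D (r + 1) := by
  classical
  obtain ⟨h1, h2, h3⟩ := h
  set K : Set W := {x | G.Reachable v x} with hKdef
  have hK : ∀ a b, G.Adj a b → a ∈ K → b ∈ K := fun a b hab ha => ha.trans hab.reachable
  have hKc : ∀ a b, G.Adj a b → a ∈ Kᶜ → b ∈ Kᶜ := fun a b hab ha hb => ha (hK b a hab.symm hb)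
  have hvK : v ∈ K := Reachable.refl v
  have hKcA : Kᶜ ⊆ A := fun x hx => by
    simp only [hAdef, Set.mem_compl_iff, Set.mem_singleton_iff]
    rintro rfl; exact hx hvK
  set S : ℕ → Set W := fun i => Subtype.val '' D' i with hSdef
  set R' : ℕ → Set ↥A := fun m => Set.univ \ ⋃ j < m, D' j with hR'def
  set Dn : ℕ → Set W := fun i =>
    match i with
    | 0 => insert v (S 0 \ K)
    | (n+1) => (S (n+1) \ K) ∪ (S n ∩ K) with hDndef
  have hDn0 : Dn 0 = insert v (S 0 \ K) := rfl
  have hDns : ∀ n, Dn (n+1) = (S (n+1) \ K) ∪ (S n ∩ K) := fun n => rfl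
  -- membership helpers
  have hSx : ∀ (i : ℕ) (x : W) (hx : x ∈ A), (x ∈ S i ↔ (⟨x, hx⟩ : ↥A) ∈ D' i) := by
    intro i x hx
    rw [hSdef]; rw [mem_val_image]
    exact ⟨fun ⟨h1, h2⟩ => h2, fun hh => ⟨hx, hh⟩⟩
  have hvS : ∀ i, v ∉ S i := by
    rintro i ⟨⟨a, ha⟩, -, hav⟩
    have hav' : a = v := hav
    rw [hAdef] at ha
    exact ha (by simp [hav'])
  have hR'x : ∀ (m : ℕ) (x : W) (hx : x ∈ A),
      (x ∈ Subtype.val '' R' m ↔ ∀ j < m, (⟨x, hx⟩ : ↥A) ∉ D' j) := by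
    intro m x hx
    rw [mem_val_image]
    constructor
    · rintro ⟨hx', hmem⟩ j hj hD
      rw [hR'def] at hmem
      exact hmem.2 (Set.mem_biUnion hj hD)
    · intro hall
      refine ⟨hx, ?_⟩
      rw [hR'def]
      refine ⟨Set.mem_univ _, ?_⟩
      intro hmem
      obtain ⟨j, hj, hD⟩ := by
        simpa using hmem
      exact hall j hj hD
  have hvR' : ∀ m, v ∉ Subtype.val '' R' m := by
    rintro m ⟨⟨a, ha⟩, -, hav⟩
    have hav' : a = v := hav
    rw [hAdef] at ha
    exact ha (by simp [hav'])
  have hsubR' : ∀ m, Subtype.val '' R' m ⊆ A := by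
    rintro m x ⟨⟨a, ha⟩, -, rfl⟩; exact ha
  -- reachability transfer
  have toWalk : ∀ (m : ℕ) (p q : ↥A) (hp : p ∈ R' m) (hq : q ∈ R' m),
      ((G.induce A).induce (R' m)).Reachable ⟨p, hp⟩ ⟨q, hq⟩ →
      ∃ w : G.Walk p.1 q.1, ∀ z ∈ w.support, z ∈ Subtype.val '' R' m := by
    intro m p q hp hq hr
    have := (Iso.reachable_iff (φ := isoDoubleInduce G A (R' m))
       (u := ⟨p, hp⟩) (v := ⟨q, hq⟩)).mpr hr
    exact exists_walk_of_reach this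
  have ofWalk : ∀ (m : ℕ) (p q : ↥A) (hp : p ∈ R' m) (hq : q ∈ R' m)
      (w : G.Walk p.1 q.1), (∀ z ∈ w.support, z ∈ Subtype.val '' R' m) →
      ((G.induce A).induce (R' m)).Reachable ⟨p, hp⟩ ⟨q, hq⟩ := by
    intro m p q hp hq w hw
    have h1 : (G.induce (Subtype.val '' R' m)).Reachable
        ⟨p.1, ⟨p, hp, rfl⟩⟩ ⟨q.1, ⟨q, hq, rfl⟩⟩ := reach_of_walk' w hw _ _
    exact (Iso.reachable_iff (φ := isoDoubleInduce G A (R' m))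
      (u := ⟨p, hp⟩) (v := ⟨q, hq⟩)).mp h1
  -- the key set identity
  have hR : ∀ m, (Set.univ \ ⋃ j < m + 1, Dn j) =
      (Subtype.val '' R' (m+1) ∩ Kᶜ) ∪ (Subtype.val '' R' m ∩ K) := by
    intro m
    ext x
    have hLHS : x ∈ (Set.univ \ ⋃ j < m + 1, Dn j) ↔ ∀ j < m + 1, x ∉ Dn j := by
      simp
    rw [hLHS, Set.mem_union, Set.mem_inter_iff, Set.mem_inter_iff, Set.mem_compl_iff]
    by_cases hxv : x = v
    · subst hxv
      constructor
      · intro hx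
        exact absurd (by rw [hDn0]; exact Set.mem_insert _ _) (hx 0 (Nat.succ_pos m))
      · rintro (⟨hmem, -⟩ | ⟨hmem, -⟩)
        · exact absurd hmem (hvR' (m+1))
        · exact absurd hmem (hvR' m)
    · have hxA : x ∈ A := by
        simp only [hAdef, Set.mem_compl_iff, Set.mem_singleton_iff]; exact hxv
      by_cases hxK : x ∈ K
      · constructor
        · intro hx
          refine Or.inr ⟨(hR'x m x hxA).mpr fun j hj hD => ?_, hxK⟩
          exact hx (j+1) (Nat.succ_lt_succ hj)
            (by rw [hDns]; exact Or.inr ⟨(hSx j x hxA).mpr hD, hxK⟩)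
        · rintro (⟨-, hxKc⟩ | ⟨hmem, -⟩)
          · exact absurd hxK hxKc
          intro j hj hD
          match j, hD with
          | 0, hD =>
            rw [hDn0] at hD
            rcases Set.mem_insert_iff.mp hD with rfl | ⟨-, hnK⟩
            · exact hxv rfl
            · exact hnK hxK
          | (n+1), hD =>
            rw [hDns] at hD
            rcases hD with ⟨-, hnK⟩ | ⟨hSn, -⟩
            · exact hnK hxK
            · exact (hR'x m x hxA).mp hmem n (by omega) ((hSx n x hxA).mp hSn)
      · constructor
        · intro hx
          refine Or.inl ⟨(hR'x (m+1) x hxA).mpr fun j hj hD => ?_, hxK⟩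
          match j, hj, hD with
          | 0, hj, hD =>
            refine hx 0 (Nat.succ_pos m) ?_
            rw [hDn0]
            exact Set.mem_insert_of_mem _ ⟨(hSx 0 x hxA).mpr hD, hxK⟩
          | (n+1), hj, hD =>
            refine hx (n+1) hj ?_
            rw [hDns]
            exact Or.inl ⟨(hSx (n+1) x hxA).mpr hD, hxK⟩
        · rintro (⟨hmem, -⟩ | ⟨-, hxK'⟩)
          swap
          · exact absurd hxK' hxK
          intro j hj hD
          match j, hj, hD with
          | 0, hj, hD =>
            rw [hDn0] at hD
            rcases Set.mem_insert_iff.mp hD with rfl | ⟨hS0, -⟩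
            · exact hxv rfl
            · exact (hR'x (m+1) x hxA).mp hmem 0 (Nat.succ_pos m) ((hSx 0 x hxA).mp hS0)
          | (n+1), hj, hD =>
            rw [hDns] at hD
            rcases hD with ⟨hSn, -⟩ | ⟨-, hK'⟩
            · exact (hR'x (m+1) x hxA).mp hmem (n+1) hj ((hSx (n+1) x hxA).mp hSn)
            · exact hxK hK'
  have h3' : ∀ i, DisStep' (G.induce A) (R' i) (D' i) := h3
  have hSA : ∀ i, S i ⊆ A := by
    rintro i x ⟨⟨a, ha⟩, -, rfl⟩; exact ha
  have hmemR'0 : ∀ p : ↥A, p ∈ R' 0 := by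
    intro p
    show p ∈ Set.univ \ ⋃ j < 0, D' j
    simp
  refine ⟨Dn, ?_, ?_, ?_⟩
  · -- lengths
    intro i hi
    cases i with
    | zero => omega
    | succ m =>
      rw [hDns]
      have e1 : D' (m+1) = ∅ := h1 (m+1) (by omega)
      have e2 : D' m = ∅ := h1 m (by omega)
      rw [hSdef]
      simp only [e1, e2, Set.image_empty]
      simp
  · -- union
    ext x
    simp only [Set.mem_iUnion, Set.mem_univ, iff_true]
    by_cases hxv : x = v
    · exact ⟨0, by rw [hDn0, hxv]; exact Set.mem_insert _ _⟩
    · have hxA : x ∈ A := by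
        rw [hAdef]; simp [hxv]
      have hx2 : (⟨x, hxA⟩ : ↥A) ∈ ⋃ i, D' i := by rw [h2]; trivial
      obtain ⟨i, hi⟩ := Set.mem_iUnion.mp hx2
      by_cases hxK : x ∈ K
      · exact ⟨i+1, by rw [hDns]; exact Or.inr ⟨(hSx i x hxA).mpr hi, hxK⟩⟩
      · cases i with
        | zero =>
          exact ⟨0, by rw [hDn0]; exact Set.mem_insert_of_mem _ ⟨(hSx 0 x hxA).mpr hi, hxK⟩⟩
        | succ n =>
          exact ⟨n+1, by rw [hDns]; exact Or.inl ⟨(hSx (n+1) x hxA).mpr hi, hxK⟩⟩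
  · -- steps
    intro i
    cases i with
    | zero =>
      have e0 : (Set.univ \ ⋃ j < 0, Dn j) = Set.univ := by simp
      rw [e0, hDn0]
      obtain ⟨hsub0, hinj0, hsurj0⟩ := h3' 0
      refine ⟨fun x _ => Set.mem_univ x, ?_, ?_⟩
      · rintro x y hx hy hne hreach
        have hGxy : G.Reachable x y := reach_ambient hreach
        rcases Set.mem_insert_iff.mp hx with rfl | ⟨hxS, hxK⟩
        · rcases Set.mem_insert_iff.mp hy with rfl | ⟨hyS, hyK⟩
          · exact hne rfl
          · exact hyK hGxy
        · rcases Set.mem_insert_iff.mp hy with rfl | ⟨hyS, hyK⟩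
          · exact hxK hGxy.symm
          · have hxA := hKcA hxK
            have hyA := hKcA hyK
            have hxD : (⟨x, hxA⟩ : ↥A) ∈ D' 0 := (hSx 0 x hxA).mp hxS
            have hyD : (⟨y, hyA⟩ : ↥A) ∈ D' 0 := (hSx 0 y hyA).mp hyS
            obtain ⟨w⟩ := hGxy
            have hsupp := support_subset_closed hKc w hxK
            have hr := ofWalk 0 ⟨x, hxA⟩ ⟨y, hyA⟩ (hmemR'0 _) (hmemR'0 _) w
              (fun z hz => (hR'x 0 z (hKcA (hsupp z hz))).mpr
                (fun j hj _ => absurd hj (Nat.not_lt_zero j)))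
            exact hinj0 ⟨x, hxA⟩ ⟨y, hyA⟩ hxD hyD
              (fun hEq => hne (congrArg Subtype.val hEq)) hr
      · rintro x -
        by_cases hxK : x ∈ K
        · refine ⟨v, Set.mem_insert _ _, ?_⟩
          obtain ⟨w⟩ := (hxK : G.Reachable v x)
          exact reach_of_walk' w (fun z _ => Set.mem_univ z) _ _
        · have hxA := hKcA hxK
          obtain ⟨d, hd, hr⟩ := hsurj0 ⟨x, hxA⟩ (hmemR'0 _)
          obtain ⟨w, hw⟩ := toWalk 0 d ⟨x, hxA⟩ (hsub0 hd) (hmemR'0 _) hr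
          have hdK : d.1 ∉ K := fun hdK =>
            hxK (support_subset_closed hK w hdK x w.end_mem_support)
          refine ⟨d.1, Set.mem_insert_of_mem _ ⟨(hSx 0 d.1 d.2).mpr hd, hdK⟩, ?_⟩
          exact reach_of_walk' w (fun z _ => Set.mem_univ z) _ _
    | succ m =>
      rw [hR m, hDns m]
      obtain ⟨hsubm, hinjm, hsurjm⟩ := h3' m
      obtain ⟨hsubm1, hinjm1, hsurjm1⟩ := h3' (m+1)
      have hsubP : (S (m+1) \ K ∪ S m ∩ K) ⊆
          (Subtype.val '' R' (m+1) ∩ Kᶜ ∪ Subtype.val '' R' m ∩ K) := by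
        rintro x (⟨hxS, hxK⟩ | ⟨hxS, hxK⟩)
        · have hxA : x ∈ A := hSA _ hxS
          exact Or.inl ⟨mem_val_image.mpr ⟨hxA, hsubm1 ((hSx _ x hxA).mp hxS)⟩, hxK⟩
        · have hxA : x ∈ A := hSA _ hxS
          exact Or.inr ⟨mem_val_image.mpr ⟨hxA, hsubm ((hSx _ x hxA).mp hxS)⟩, hxK⟩
      refine ⟨hsubP, ?_, ?_⟩
      · rintro x y hx hy hne hreach
        have hGxy : G.Reachable x y := reach_ambient hreach
        by_cases hxK : x ∈ K
        · have hyK : y ∈ K := by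
            obtain ⟨w⟩ := hGxy
            exact support_subset_closed hK w hxK y w.end_mem_support
          have hx' : x ∈ S m ∩ K := by
            rcases hx with ⟨-, hxKc⟩ | h' 
            · exact absurd hxK hxKc
            · exact h'
          have hy' : y ∈ S m ∩ K := by
            rcases hy with ⟨-, hyKc⟩ | h'
            · exact absurd hyK hyKc
            · exact h'
          have hxA : x ∈ A := hSA _ hx'.1
          have hyA : y ∈ A := hSA _ hy'.1
          have hxD : (⟨x, hxA⟩ : ↥A) ∈ D' m := (hSx m x hxA).mp hx'.1
          have hyD : (⟨y, hyA⟩ : ↥A) ∈ D' m := (hSx m y hyA).mp hy'.1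
          obtain ⟨hC2, hreach2⟩ := reach_closed hK hxK hreach
          have hPK : (Subtype.val '' R' (m+1) ∩ Kᶜ ∪ Subtype.val '' R' m ∩ K) ∩ K ⊆
              Subtype.val '' R' m := by
            rintro z ⟨(⟨zmem, zKc⟩ | ⟨zmem, -⟩), zK⟩
            · exact absurd zK zKc
            · exact zmem
          have hreach3 := reach_mono hPK hreach2
          have hreach4 := (Iso.reachable_iff (φ := isoDoubleInduce G A (R' m))
            (u := ⟨⟨x, hxA⟩, hsubm hxD⟩) (v := ⟨⟨y, hyA⟩, hsubm hyD⟩)).mp hreach3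
          exact hinjm _ _ hxD hyD (fun hEq => hne (congrArg Subtype.val hEq)) hreach4
        · have hyK : y ∉ K := by
            intro hyK
            obtain ⟨w⟩ := hGxy.symm
            exact hxK (support_subset_closed hK w hyK x w.end_mem_support)
          have hx' : x ∈ S (m+1) \ K := by
            rcases hx with h' | ⟨-, hxK'⟩
            · exact h'
            · exact absurd hxK' hxK
          have hy' : y ∈ S (m+1) \ K := by
            rcases hy with h' | ⟨-, hyK'⟩
            · exact h'
            · exact absurd hyK' hyK
          have hxA : x ∈ A := hSA _ hx'.1
          have hyA : y ∈ A := hSA _ hy'.1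
          have hxD : (⟨x, hxA⟩ : ↥A) ∈ D' (m+1) := (hSx (m+1) x hxA).mp hx'.1
          have hyD : (⟨y, hyA⟩ : ↥A) ∈ D' (m+1) := (hSx (m+1) y hyA).mp hy'.1
          obtain ⟨hC2, hreach2⟩ := reach_closed hKc hxK hreach
          have hPK : (Subtype.val '' R' (m+1) ∩ Kᶜ ∪ Subtype.val '' R' m ∩ K) ∩ Kᶜ ⊆
              Subtype.val '' R' (m+1) := by
            rintro z ⟨(⟨zmem, -⟩ | ⟨zmem, zK⟩), zKc⟩
            · exact zmem
            · exact absurd zK zKc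
          have hreach3 := reach_mono hPK hreach2
          have hreach4 := (Iso.reachable_iff (φ := isoDoubleInduce G A (R' (m+1)))
            (u := ⟨⟨x, hxA⟩, hsubm1 hxD⟩) (v := ⟨⟨y, hyA⟩, hsubm1 hyD⟩)).mp hreach3
          exact hinjm1 _ _ hxD hyD (fun hEq => hne (congrArg Subtype.val hEq)) hreach4
      · rintro x hx
        rcases hx with ⟨hxR, hxKc⟩ | ⟨hxR, hxK⟩
        · obtain ⟨hxA, hxR'⟩ := mem_val_image.mp hxR
          obtain ⟨d, hd, hr⟩ := hsurjm1 ⟨x, hxA⟩ hxR'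
          obtain ⟨w, hw⟩ := toWalk (m+1) d ⟨x, hxA⟩ (hsubm1 hd) hxR' hr
          have hdKc : d.1 ∉ K := fun hdK =>
            hxKc (support_subset_closed hK w hdK x w.end_mem_support)
          refine ⟨d.1, Or.inl ⟨(hSx (m+1) d.1 d.2).mpr hd, hdKc⟩, ?_⟩
          have hsupK := support_subset_closed hKc w hdKc
          exact reach_of_walk' w (fun z hz => Or.inl ⟨hw z hz, hsupK z hz⟩) _ _
        · obtain ⟨hxA, hxR'⟩ := mem_val_image.mp hxR
          obtain ⟨d, hd, hr⟩ := hsurjm ⟨x, hxA⟩ hxR'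
          obtain ⟨w, hw⟩ := toWalk m d ⟨x, hxA⟩ (hsubm hd) hxR' hr
          have hdK : d.1 ∈ K := by
            by_contra hdK
            exact (support_subset_closed hKc w hdK x w.end_mem_support) hxK
          refine ⟨d.1, Or.inr ⟨(hSx m d.1 d.2).mpr hd, hdK⟩, ?_⟩
          have hsupK := support_subset_closed hK w hdK
          exact reach_of_walk' w (fun z hz => Or.inr ⟨hw z hz, hsupK z hz⟩) _ _
end Key


section Final
variable {W : Type*}

lemma resilience_le_succ [Finite W] (G : SimpleGraph W) (v : W) (A : Set W)
    (hA : A = {v}ᶜ) : resilience G ≤ resilience (G.induce A) + 1 := by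
  obtain ⟨D0, hD0⟩ := exists_dis' (G.induce A)
  have hne : {n | ∃ D, IsDisintegration (G.induce A) D n}.Nonempty :=
    ⟨Nat.card ↥A, D0, isDis_iff.mpr hD0⟩
  have hmem : resilience (G.induce A) ∈ {n | ∃ D, IsDisintegration (G.induce A) D n} :=
    Nat.sInf_mem hne
  obtain ⟨D', hD'⟩ := hmem
  obtain ⟨D, hD⟩ := key_step G v A hA (isDis_iff.mp hD')
  exact Nat.sInf_le ⟨D, isDis_iff.mpr hD⟩
end Final

theorem stmt1 {V : Type*} [Fintype V] (G : SimpleGraph V) (V' : Finset V) :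
    resilience G ≤ resilience (G.induce ((V' : Set V)ᶜ)) + V'.card := by
  classical
  induction V' using Finset.induction_on with
  | empty =>
    have iso2 : G.induce (((∅ : Finset V) : Set V)ᶜ) ≃g G :=
      (isoOfSetEq (by simp)).trans (induceUnivIso G)
    rw [resilience_eq_of_iso iso2]
    simp
  | @insert a s ha ih =>
    have haA : a ∈ ((s : Set V))ᶜ := by simp [ha]
    have hkey := resilience_le_succ (G.induce ((s : Set V)ᶜ))
      (⟨a, haA⟩ : ↥((s : Set V)ᶜ)) ({(⟨a, haA⟩ : ↥((s : Set V)ᶜ))}ᶜ) rfl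
    have hisoset : Subtype.val '' ({(⟨a, haA⟩ : ↥((s : Set V)ᶜ))}ᶜ : Set ↥((s : Set V)ᶜ)) =
        ((insert a s : Finset V) : Set V)ᶜ := by
      ext x
      rw [mem_val_image]
      simp only [Set.mem_compl_iff, Set.mem_singleton_iff, Subtype.ext_iff,
        Finset.coe_insert, Set.mem_insert_iff, Finset.mem_coe]
      constructor
      · rintro ⟨hx, hne⟩
        push_neg
        exact ⟨hne, by simpa using hx⟩
      · intro hx
        push_neg at hx
        exact ⟨by simpa using hx.2, hx.1⟩
    have hiso : (G.induce ((s : Set V)ᶜ)).induce ({(⟨a, haA⟩ : ↥((s : Set V)ᶜ))}ᶜ) ≃g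
        G.induce (((insert a s : Finset V) : Set V)ᶜ) :=
      (isoDoubleInduce G _ _).trans (isoOfSetEq hisoset)
    rw [Finset.card_insert_of_notMem ha]
    calc resilience G ≤ resilience (G.induce ((s : Set V)ᶜ)) + s.card := ih
      _ ≤ (resilience ((G.induce ((s : Set V)ᶜ)).induce
            ({(⟨a, haA⟩ : ↥((s : Set V)ᶜ))}ᶜ)) + 1) + s.card :=
          Nat.add_le_add_right hkey s.card
      _ = resilience (G.induce (((insert a s : Finset V) : Set V)ᶜ)) + (s.card + 1) := by
          rw [resilience_eq_of_iso hiso]; ring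
end

section
/- Let b ≥ 1, t ≥ 1. For graphs G_1,...,G_t, the ℓ¹ ε-covering number of the set of probability tensors Markov to the disjoint union of the G_i is at most the product over i of the (ε/t)-covering numbers of the sets of probability tensors Markov to each G_i: N(T_b(⊕_i G_i), ε) ≤ ∏_i N(T_b(G_i), ε/t). -/
open SimpleGraph

/-- `S` separates `A` from `B` in `G`: every walk from `A` to `B` meets `S`. -/
def Separates {V : Type*} (G : SimpleGraph V) (A B S : Set V) : Prop :=
  ∀ a ∈ A, ∀ b ∈ B, ∀ w : G.Walk a b, ∃ v ∈ w.support, v ∈ S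

/-- Marginal of a tensor `T` on the variables in `U`, evaluated at the assignment `σ`. -/
def marginal {V : Type*} [Fintype V] [DecidableEq V] {b : ℕ}
    (T : (V → Fin b) → ℝ) (U : Finset V) (σ : V → Fin b) : ℝ :=
  ∑ x : V → Fin b, if ∀ u ∈ U, x u = σ u then T x else 0

/-- The (global) Markov property of a probability tensor with respect to `G`:
graph separation implies conditional independence. -/
def IsMarkov {V : Type*} [Fintype V] [DecidableEq V] {b : ℕ} (G : SimpleGraph V)
    (T : (V → Fin b) → ℝ) : Prop :=
  ∀ A B S : Finset V, Disjoint A B → Disjoint A S → Disjoint B S →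
    Separates G ↑A ↑B ↑S →
    ∀ σ : V → Fin b,
      marginal T (A ∪ B ∪ S) σ * marginal T S σ =
        marginal T (A ∪ S) σ * marginal T (B ∪ S) σ

/-- The set `𝒯_b(G)` of probability tensors with `b` states per variable
that are Markov with respect to `G`. -/
def probTensors {V : Type*} [Fintype V] [DecidableEq V] (b : ℕ) (G : SimpleGraph V) :
    Set ((V → Fin b) → ℝ) :=
  {T | (∀ x, 0 ≤ T x) ∧ (∑ x, T x = 1) ∧ IsMarkov G T}

/-- ℓ¹ distance between tensors. -/
def l1Dist {α : Type*} [Fintype α] (T T' : α → ℝ) : ℝ := ∑ x, |T x - T' x|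

/-- The ε-covering number of `A` (with centers in `A`) under distance `dist`. -/
noncomputable def coverNum {α : Type*} (A : Set α) (dist : α → α → ℝ) (ε : ℝ) : ℕ∞ :=
  sInf {n : ℕ∞ | ∃ C : Finset α, ↑C ⊆ A ∧ (C.card : ℕ∞) = n ∧
    ∀ a ∈ A, ∃ c ∈ C, dist a c ≤ ε}

/-- Disjoint union of a family of graphs. -/
def disjUnion {ι : Type*} {W : ι → Type*} (G : ∀ i, SimpleGraph (W i)) :
    SimpleGraph (Σ i, W i) :=
  SimpleGraph.fromRel (fun x y => ∃ h : x.1 = y.1, (G y.1).Adj (h ▸ x.2) y.2)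

/-! ### Auxiliary material -/

section Graph

variable {ι : Type*} {W : ι → Type*} {G : ∀ i, SimpleGraph (W i)}

lemma disjUnion_adj_fst {x y : Σ i, W i} (h : (disjUnion G).Adj x y) : x.1 = y.1 := by
  rw [disjUnion, fromRel_adj] at h
  rcases h.2 with ⟨h', -⟩ | ⟨h', -⟩
  · exact h'
  · exact h'.symm

lemma disjUnion_adj_comp {i : ι} {a c : W i}
    (h : (disjUnion G).Adj ⟨i, a⟩ ⟨i, c⟩) : (G i).Adj a c := by
  rw [disjUnion, fromRel_adj] at h
  rcases h.2 with ⟨h', ha⟩ | ⟨h', ha⟩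
  · exact ha
  · exact ha.symm

lemma adj_disjUnion {i : ι} {a c : W i} (h : (G i).Adj a c) :
    (disjUnion G).Adj ⟨i, a⟩ ⟨i, c⟩ := by
  rw [disjUnion, fromRel_adj]
  refine ⟨?_, Or.inl ⟨rfl, h⟩⟩
  intro he
  injection he with h1 h2
  exact h.ne h2

/-- The inclusion of a component as a graph homomorphism. -/
def compHom (G : ∀ i, SimpleGraph (W i)) (i : ι) : G i →g disjUnion G :=
  ⟨Sigma.mk i, fun h => adj_disjUnion h⟩

lemma walk_fst : ∀ {x y : Σ i, W i}, (disjUnion G).Walk x y → x.1 = y.1 := by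
  intro x y w
  induction w with
  | nil => rfl
  | cons h _ ih => exact (disjUnion_adj_fst h).trans ih

lemma proj_walk {i : ι} :
    ∀ {x y : Σ j, W j} (w : (disjUnion G).Walk x y) {a c : W i},
      x = ⟨i, a⟩ → y = ⟨i, c⟩ →
      ∃ p : (G i).Walk a c, ∀ u ∈ p.support, (⟨i, u⟩ : Σ j, W j) ∈ w.support := by
  intro x y w
  induction w with
  | nil =>
    intro a c hx hy
    subst hx
    injection hy with h1 h2
    obtain rfl := h2
    exact ⟨Walk.nil, by simp⟩
  | @cons x v y h w ih =>
    intro a c hx hy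
    subst hx
    obtain ⟨j, z⟩ := v
    obtain rfl : i = j := disjUnion_adj_fst h
    obtain ⟨p, hp⟩ := ih rfl hy
    refine ⟨Walk.cons (disjUnion_adj_comp h) p, ?_⟩
    intro u hu
    rw [Walk.support_cons] at hu ⊢
    rcases List.mem_cons.1 hu with rfl | hu
    · exact List.mem_cons_self
    · exact List.mem_cons_of_mem _ (hp u hu)

lemma separates_comp {A B S : Set (Σ j, W j)} (h : Separates (disjUnion G) A B S) (i : ι) :
    Separates (G i) (Sigma.mk i ⁻¹' A) (Sigma.mk i ⁻¹' B) (Sigma.mk i ⁻¹' S) := by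
  intro a ha c hc p
  obtain ⟨v, hv, hvS⟩ := h ⟨i, a⟩ ha ⟨i, c⟩ hc (p.map (compHom G i))
  replace hv : v ∈ (p.map (compHom G i)).support := hv
  rw [Walk.support_map] at hv
  obtain ⟨u, hu, rfl⟩ := List.mem_map.1 hv
  exact ⟨u, hu, hvS⟩

lemma separates_map {i : ι} {A B S : Set (W i)} (h : Separates (G i) A B S) :
    Separates (disjUnion G) (Sigma.mk i '' A) (Sigma.mk i '' B) (Sigma.mk i '' S) := by
  rintro x ⟨a, ha, rfl⟩ y ⟨c, hc, rfl⟩ w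
  obtain ⟨p, hp⟩ := proj_walk w rfl rfl
  obtain ⟨v, hv, hvS⟩ := h a ha c hc p
  exact ⟨⟨i, v⟩, hp v hv, ⟨v, hvS, rfl⟩⟩

end Graph

section Tensor

variable {t b : ℕ} {W : Fin t → Type*} [∀ i, Fintype (W i)] [∀ i, DecidableEq (W i)]

/-- Restriction of an assignment to one component. -/
def restr (i : Fin t) (x : (Σ j, W j) → Fin b) : W i → Fin b := fun w => x ⟨i, w⟩

/-- Product tensor. -/
def prodT (T : ∀ i, (W i → Fin b) → ℝ) : ((Σ j, W j) → Fin b) → ℝ :=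
  fun x => ∏ i, T i (restr i x)

/-- Marginal of a big tensor on the `i`-th component. -/
noncomputable def comp (i : Fin t) (T : ((Σ j, W j) → Fin b) → ℝ) : (W i → Fin b) → ℝ :=
  fun y => ∑ x : (Σ j, W j) → Fin b, if restr i x = y then T x else 0

lemma sum_prod_restr (g : ∀ i, (W i → Fin b) → ℝ) :
    ∑ x : (Σ j, W j) → Fin b, ∏ i, g i (restr i x) = ∏ i, ∑ y : W i → Fin b, g i y := by
  rw [Fintype.prod_sum]
  exact Fintype.sum_equiv (Equiv.piCurry fun _ _ => Fin b) _ _ (fun x => rfl)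

lemma marginal_prodT (T : ∀ i, (W i → Fin b) → ℝ) (U : Finset (Σ j, W j))
    (σ : (Σ j, W j) → Fin b) :
    marginal (prodT T) U σ
      = ∏ i, marginal (T i) (U.preimage (Sigma.mk i) sigma_mk_injective.injOn)
          (restr i σ) := by
  classical
  have h1 : ∀ x : (Σ j, W j) → Fin b,
      (if ∀ u ∈ U, x u = σ u then prodT T x else 0)
        = ∏ i, (fun y => if ∀ w ∈ U.preimage (Sigma.mk i) sigma_mk_injective.injOn,
            y w = restr i σ w then T i y else 0) (restr i x) := by
    intro x
    by_cases hc : ∀ u ∈ U, x u = σ u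
    · rw [if_pos hc]
      refine (Finset.prod_congr rfl fun i _ => ?_).symm
      exact if_pos fun w hw => hc _ (Finset.mem_preimage.1 hw)
    · rw [if_neg hc]
      push_neg at hc
      obtain ⟨⟨i, w⟩, hu, hne⟩ := hc
      refine (Finset.prod_eq_zero (Finset.mem_univ i) ?_).symm
      exact if_neg fun hall => hne (hall w (Finset.mem_preimage.2 hu))
  rw [marginal, Finset.sum_congr rfl fun x _ => h1 x]
  exact sum_prod_restr fun i y =>
    if ∀ w ∈ U.preimage (Sigma.mk i) sigma_mk_injective.injOn, y w = restr i σ w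
    then T i y else 0

lemma marginal_comp (i : Fin t) (T : ((Σ j, W j) → Fin b) → ℝ) (U : Finset (W i))
    (σ : (Σ j, W j) → Fin b) :
    marginal (comp i T) U (restr i σ)
      = marginal T (U.map ⟨Sigma.mk i, sigma_mk_injective⟩) σ := by
  classical
  unfold marginal comp
  have step1 : ∀ y : W i → Fin b,
      (if ∀ u ∈ U, y u = restr i σ u
          then (∑ x : (Σ j, W j) → Fin b, if restr i x = y then T x else 0) else 0)
        = ∑ x : (Σ j, W j) → Fin b,
            if restr i x = y then (if ∀ u ∈ U, y u = restr i σ u then T x else 0) else 0 := by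
    intro y
    by_cases hc : ∀ u ∈ U, y u = restr i σ u
    · rw [if_pos hc]
      exact Finset.sum_congr rfl fun x _ => by rw [if_pos hc]
    · rw [if_neg hc]
      symm
      simp [if_neg hc]
  rw [Finset.sum_congr rfl fun y _ => step1 y, Finset.sum_comm]
  refine Finset.sum_congr rfl fun x _ => ?_
  rw [Finset.sum_ite_eq (Finset.univ) (restr i x)
    (fun y => if ∀ u ∈ U, y u = restr i σ u then T x else 0)]
  rw [if_pos (Finset.mem_univ _)]
  congr 1
  · refine propext ⟨fun h u hu => ?_, fun h u hu => ?_⟩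
    · obtain ⟨w, hw, rfl⟩ := Finset.mem_map.1 hu
      exact h w hw
    · exact h ⟨i, u⟩ (Finset.mem_map.2 ⟨u, hu, rfl⟩)

lemma marginal_empty (T : ((Σ j, W j) → Fin b) → ℝ) (h1 : ∑ x, T x = 1)
    (σ : (Σ j, W j) → Fin b) : marginal T (∅ : Finset (Σ j, W j)) σ = 1 := by
  simpa [marginal] using h1

lemma marginal_univ (T : ((Σ j, W j) → Fin b) → ℝ) (σ : (Σ j, W j) → Fin b) :
    marginal T (Finset.univ : Finset (Σ j, W j)) σ = T σ := by
  classical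
  unfold marginal
  have h1 : ∀ x : (Σ j, W j) → Fin b,
      (if ∀ u ∈ (Finset.univ : Finset (Σ j, W j)), x u = σ u then T x else 0)
        = if x = σ then T x else 0 := by
    intro x
    congr 1
    simp [funext_iff]
  rw [Finset.sum_congr rfl fun x _ => h1 x, Finset.sum_ite_eq' Finset.univ σ T,
    if_pos (Finset.mem_univ _)]

variable {G : ∀ i, SimpleGraph (W i)}

lemma preimage_union' (A B : Finset (Σ j, W j)) (i : Fin t) :
    (A ∪ B).preimage (Sigma.mk i) sigma_mk_injective.injOn
      = A.preimage (Sigma.mk i) sigma_mk_injective.injOn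
        ∪ B.preimage (Sigma.mk i) sigma_mk_injective.injOn := by
  ext w; simp [Finset.mem_preimage]
  exact or_congr Finset.mem_preimage Finset.mem_preimage

lemma disjoint_preimage' {A B : Finset (Σ j, W j)} (h : Disjoint A B) (i : Fin t) :
    Disjoint (A.preimage (Sigma.mk i) sigma_mk_injective.injOn)
      (B.preimage (Sigma.mk i) sigma_mk_injective.injOn) := by
  rw [Finset.disjoint_left] at h ⊢
  intro w hw hw'
  exact h (Finset.mem_preimage.1 hw) (Finset.mem_preimage.1 hw')

lemma prodT_mem (T : ∀ i, (W i → Fin b) → ℝ)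
    (hT : ∀ i, T i ∈ probTensors b (G i)) : prodT T ∈ probTensors b (disjUnion G) := by
  classical
  refine ⟨fun x => Finset.prod_nonneg fun i _ => (hT i).1 _, ?_, ?_⟩
  · rw [show (∑ x, prodT T x) = ∏ i, ∑ y, T i y from sum_prod_restr T]
    exact Finset.prod_eq_one fun i _ => (hT i).2.1
  · intro A B S dAB dAS dBS sep σ
    rw [marginal_prodT, marginal_prodT, marginal_prodT, marginal_prodT,
      ← Finset.prod_mul_distrib, ← Finset.prod_mul_distrib]
    refine Finset.prod_congr rfl fun i _ => ?_
    have hsep : Separates (G i)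
        ↑(A.preimage (Sigma.mk i) sigma_mk_injective.injOn)
        ↑(B.preimage (Sigma.mk i) sigma_mk_injective.injOn)
        ↑(S.preimage (Sigma.mk i) sigma_mk_injective.injOn) := by
      rw [Finset.coe_preimage, Finset.coe_preimage, Finset.coe_preimage]
      exact separates_comp sep i
    have := (hT i).2.2 _ _ _ (disjoint_preimage' dAB i) (disjoint_preimage' dAS i)
      (disjoint_preimage' dBS i) hsep (restr i σ)
    simpa [preimage_union'] using this

/-- Extension of an assignment on one component by a constant. -/
def extT (hb : 1 ≤ b) (i : Fin t) (τ : W i → Fin b) : (Σ j, W j) → Fin b :=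
  fun v => if h : v.1 = i then τ (h ▸ v.2) else ⟨0, hb⟩

lemma restr_extT (hb : 1 ≤ b) (i : Fin t) (τ : W i → Fin b) :
    restr i (extT hb i τ) = τ := by
  funext w
  simp [restr, extT]

lemma comp_mem (hb : 1 ≤ b) (i : Fin t) (T : ((Σ j, W j) → Fin b) → ℝ)
    (hT : T ∈ probTensors b (disjUnion G)) : comp i T ∈ probTensors b (G i) := by
  classical
  refine ⟨?_, ?_, ?_⟩
  · intro y
    unfold comp
    refine Finset.sum_nonneg fun x _ => ?_
    split
    · exact hT.1 x
    · exact le_rfl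
  · unfold comp
    rw [Finset.sum_comm]
    have h : ∀ x : (Σ j, W j) → Fin b,
        (∑ y : W i → Fin b, if restr i x = y then T x else 0) = T x := by
      intro x
      rw [Finset.sum_ite_eq Finset.univ (restr i x) (fun _ => T x),
        if_pos (Finset.mem_univ _)]
    rw [Finset.sum_congr rfl fun x _ => h x]
    exact hT.2.1
  · intro A B S dAB dAS dBS sep τ
    have key : ∀ U : Finset (W i), marginal (comp i T) U τ
        = marginal T (U.map ⟨Sigma.mk i, sigma_mk_injective⟩) (extT hb i τ) := by
      intro U
      conv_lhs => rw [← restr_extT hb i τ]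
      exact marginal_comp i T U (extT hb i τ)
    rw [key, key, key, key, Finset.map_union, Finset.map_union, Finset.map_union,
      Finset.map_union]
    refine hT.2.2 (A.map ⟨Sigma.mk i, sigma_mk_injective⟩)
      (B.map ⟨Sigma.mk i, sigma_mk_injective⟩) (S.map ⟨Sigma.mk i, sigma_mk_injective⟩)
      ?_ ?_ ?_ ?_ (extT hb i τ)
    · rwa [Finset.disjoint_map]
    · rwa [Finset.disjoint_map]
    · rwa [Finset.disjoint_map]
    · rw [Finset.coe_map, Finset.coe_map, Finset.coe_map]
      exact separates_map sep

lemma marginal_single (i : Fin t) (T : ((Σ j, W j) → Fin b) → ℝ)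
    (σ : (Σ j, W j) → Fin b) :
    marginal T (Finset.univ.filter fun v : Σ j, W j => v.1 = i) σ
      = comp i T (restr i σ) := by
  classical
  unfold marginal comp
  refine Finset.sum_congr rfl fun x _ => ?_
  refine if_congr ⟨fun h => ?_, fun h => ?_⟩ rfl rfl
  · funext w
    exact h ⟨i, w⟩ (by simp)
  · rintro ⟨j, w⟩ hu
    rw [Finset.mem_filter] at hu
    obtain rfl : j = i := hu.2
    exact congrFun h w

lemma marginal_components (T : ((Σ j, W j) → Fin b) → ℝ)
    (hT : T ∈ probTensors b (disjUnion G)) (s : Finset (Fin t)) (σ : (Σ j, W j) → Fin b) :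
    marginal T (Finset.univ.filter fun v : Σ j, W j => v.1 ∈ s) σ
      = ∏ i ∈ s, comp i T (restr i σ) := by
  classical
  induction s using Finset.induction_on with
  | empty => simpa using marginal_empty T hT.2.1 σ
  | @insert i s hi ih =>
    have hsplit : (Finset.univ.filter fun v : Σ j, W j => v.1 ∈ insert i s)
        = (Finset.univ.filter fun v : Σ j, W j => v.1 = i)
          ∪ (Finset.univ.filter fun v : Σ j, W j => v.1 ∈ s) := by
      ext v
      simp [Finset.mem_insert]
    have hdisj : Disjoint (Finset.univ.filter fun v : Σ j, W j => v.1 = i)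
        (Finset.univ.filter fun v : Σ j, W j => v.1 ∈ s) := by
      rw [Finset.disjoint_left]
      intro v hv hv'
      rw [Finset.mem_filter] at hv hv'
      exact hi (hv.2 ▸ hv'.2)
    have hsep : Separates (disjUnion G)
        ↑(Finset.univ.filter fun v : Σ j, W j => v.1 = i)
        ↑(Finset.univ.filter fun v : Σ j, W j => v.1 ∈ s)
        ↑(∅ : Finset (Σ j, W j)) := by
      intro a ha c hc w
      exfalso
      simp only [Finset.coe_filter, Set.mem_setOf_eq, Finset.mem_univ, true_and] at ha hc
      have hac := walk_fst w
      exact hi (by rw [← ha, hac]; exact hc)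
    have hmk := hT.2.2 _ _ ∅ hdisj (Finset.disjoint_empty_right _)
      (Finset.disjoint_empty_right _) hsep σ
    simp only [Finset.union_empty] at hmk
    rw [marginal_empty T hT.2.1, mul_one] at hmk
    rw [hsplit, hmk, Finset.prod_insert hi, ← ih, marginal_single]

lemma prodT_comp (T : ((Σ j, W j) → Fin b) → ℝ)
    (hT : T ∈ probTensors b (disjUnion G)) : T = prodT (fun i => comp i T) := by
  classical
  funext σ
  have h := marginal_components T hT Finset.univ σ
  have h2 : (Finset.univ.filter fun v : Σ j, W j => v.1 ∈ Finset.univ)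
      = (Finset.univ : Finset (Σ j, W j)) := by simp
  rw [h2, marginal_univ] at h
  exact h

lemma l1Dist_triangle {α : Type*} [Fintype α] (f g h : α → ℝ) :
    l1Dist f h ≤ l1Dist f g + l1Dist g h := by
  unfold l1Dist
  rw [← Finset.sum_add_distrib]
  exact Finset.sum_le_sum fun x _ => abs_sub_le _ _ _

lemma l1_prodT (T T' : ∀ i, (W i → Fin b) → ℝ)
    (hT0 : ∀ i y, 0 ≤ T i y) (hT1 : ∀ i, ∑ y, T i y = 1)
    (hT0' : ∀ i y, 0 ≤ T' i y) (hT1' : ∀ i, ∑ y, T' i y = 1) :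
    l1Dist (prodT T) (prodT T') ≤ ∑ i, l1Dist (T i) (T' i) := by
  classical
  suffices key : ∀ s : Finset (Fin t),
      l1Dist (fun x => ∏ j, if j ∈ s then T j (restr j x) else T' j (restr j x)) (prodT T')
        ≤ ∑ i ∈ s, l1Dist (T i) (T' i) by
    have h := key Finset.univ
    simp only [Finset.mem_univ, if_true] at h
    exact h
  intro s
  induction s using Finset.induction_on with
  | empty => simp [prodT, l1Dist]
  | @insert i s hi ih =>
    refine le_trans (l1Dist_triangle _
      (fun x => ∏ j, if j ∈ s then T j (restr j x) else T' j (restr j x)) _) ?_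
    rw [Finset.sum_insert hi]
    refine add_le_add (le_of_eq ?_) ih
    set h : ∀ j, (W j → Fin b) → ℝ :=
      fun j y => if j = i then |T j y - T' j y| else if j ∈ s then T j y else T' j y with hh
    have point : ∀ x : (Σ j, W j) → Fin b,
        |(∏ j, if j ∈ insert i s then T j (restr j x) else T' j (restr j x))
          - ∏ j, if j ∈ s then T j (restr j x) else T' j (restr j x)|
        = ∏ j, h j (restr j x) := by
      intro x
      have e1 : (∏ j, if j ∈ insert i s then T j (restr j x) else T' j (restr j x))
          = T i (restr i x) * ∏ j ∈ Finset.univ.erase i,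
              (if j ∈ s then T j (restr j x) else T' j (restr j x)) := by
        rw [← Finset.mul_prod_erase Finset.univ _ (Finset.mem_univ i),
          if_pos (Finset.mem_insert_self i s)]
        congr 1
        refine Finset.prod_congr rfl fun j hj => ?_
        have hji : j ≠ i := (Finset.mem_erase.1 hj).1
        by_cases hjs : j ∈ s
        · rw [if_pos (Finset.mem_insert_of_mem hjs), if_pos hjs]
        · rw [if_neg (fun hins => hjs ((Finset.mem_insert.1 hins).resolve_left hji)),
            if_neg hjs]
      have e2 : (∏ j, if j ∈ s then T j (restr j x) else T' j (restr j x))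
          = T' i (restr i x) * ∏ j ∈ Finset.univ.erase i,
              (if j ∈ s then T j (restr j x) else T' j (restr j x)) := by
        rw [← Finset.mul_prod_erase Finset.univ _ (Finset.mem_univ i), if_neg hi]
      have e3 : (∏ j, h j (restr j x))
          = |T i (restr i x) - T' i (restr i x)| * ∏ j ∈ Finset.univ.erase i,
              (if j ∈ s then T j (restr j x) else T' j (restr j x)) := by
        rw [← Finset.mul_prod_erase Finset.univ _ (Finset.mem_univ i)]
        rw [hh]
        simp only [if_pos rfl]
        congr 1
        refine Finset.prod_congr rfl fun j hj => ?_
        rw [if_neg (Finset.mem_erase.1 hj).1]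
      rw [e1, e2, e3, ← sub_mul, abs_mul]
      congr 1
      refine abs_of_nonneg (Finset.prod_nonneg fun j _ => ?_)
      by_cases hjs : j ∈ s
      · rw [if_pos hjs]; exact hT0 j _
      · rw [if_neg hjs]; exact hT0' j _
    unfold l1Dist
    rw [Finset.sum_congr rfl fun x _ => point x, sum_prod_restr h,
      ← Finset.mul_prod_erase Finset.univ _ (Finset.mem_univ i)]
    have hsi : (∑ y : W i → Fin b, h i y) = l1Dist (T i) (T' i) := by
      rw [hh]
      simp only [if_pos rfl]
      rfl
    have hrest : (∏ j ∈ Finset.univ.erase i, ∑ y : W j → Fin b, h j y) = 1 := by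
      refine Finset.prod_eq_one fun j hj => ?_
      rw [hh]
      simp only [if_neg (Finset.mem_erase.1 hj).1]
      by_cases hjs : j ∈ s
      · simp only [if_pos hjs]; exact hT1 j
      · simp only [if_neg hjs]; exact hT1' j
    rw [hsi, hrest, mul_one]
    rfl

lemma uniform_mem {V : Type*} [Fintype V] [DecidableEq V] {b : ℕ} (hb : 1 ≤ b)
    (Gv : SimpleGraph V) :
    (fun _ : V → Fin b => ((b : ℝ) ^ Fintype.card V)⁻¹) ∈ probTensors b Gv := by
  classical
  have hb0 : (0 : ℝ) < (b : ℝ) := by exact_mod_cast hb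
  have hbpos : (0 : ℝ) < (b : ℝ) ^ Fintype.card V := pow_pos hb0 _
  refine ⟨fun _ => (inv_nonneg).2 hbpos.le, ?_, ?_⟩
  · rw [Finset.sum_const, Finset.card_univ, Fintype.card_fun, nsmul_eq_mul]
    push_cast
    rw [Fintype.card_fin]
    exact mul_inv_cancel₀ hbpos.ne'
  · intro A B S dAB dAS dBS _ σ
    have hmar : ∀ U : Finset V,
        marginal (fun _ : V → Fin b => ((b : ℝ) ^ Fintype.card V)⁻¹) U σ
          = ((b : ℝ) ^ Fintype.card V)⁻¹ * ∏ v, (if v ∈ U then (1 : ℝ) else b) := by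
      intro U
      unfold marginal
      have h1 : ∀ x : V → Fin b,
          (if ∀ u ∈ U, x u = σ u then ((b : ℝ) ^ Fintype.card V)⁻¹ else 0)
            = ((b : ℝ) ^ Fintype.card V)⁻¹
              * ∏ v, (if v ∈ U then (if x v = σ v then (1 : ℝ) else 0) else 1) := by
        intro x
        by_cases hc : ∀ u ∈ U, x u = σ u
        · rw [if_pos hc]
          rw [Finset.prod_congr rfl fun v _ => ?_, Finset.prod_const_one, mul_one]
          by_cases hv : v ∈ U
          · rw [if_pos hv, if_pos (hc v hv)]
          · rw [if_neg hv]
        · rw [if_neg hc]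
          push_neg at hc
          obtain ⟨u, hu, hne⟩ := hc
          rw [Finset.prod_eq_zero (Finset.mem_univ u) (by rw [if_pos hu, if_neg hne]),
            mul_zero]
      rw [Finset.sum_congr rfl fun x _ => h1 x, ← Finset.mul_sum]
      congr 1
      have hps := (Fintype.prod_sum fun v (y : Fin b) =>
        if v ∈ U then (if y = σ v then (1 : ℝ) else 0) else 1).symm
      refine hps.trans ?_
      refine Finset.prod_congr rfl fun v _ => ?_
      by_cases hv : v ∈ U
      · simp [hv]
      · simp [hv]
    have hPP : (∏ v, (if v ∈ A ∪ B ∪ S then (1 : ℝ) else b))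
          * (∏ v, (if v ∈ S then (1 : ℝ) else b))
        = (∏ v, (if v ∈ A ∪ S then (1 : ℝ) else b))
          * (∏ v, (if v ∈ B ∪ S then (1 : ℝ) else b)) := by
      rw [← Finset.prod_mul_distrib, ← Finset.prod_mul_distrib]
      refine Finset.prod_congr rfl fun v _ => ?_
      have h1 : v ∈ A → v ∉ B := fun h => Finset.disjoint_left.mp dAB h
      have h2 : v ∈ A → v ∉ S := fun h => Finset.disjoint_left.mp dAS h
      have h3 : v ∈ B → v ∉ S := fun h => Finset.disjoint_left.mp dBS h
      by_cases hA : v ∈ A <;> by_cases hB : v ∈ B <;> by_cases hS : v ∈ S <;>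
        simp_all [Finset.mem_union]
    rw [hmar, hmar, hmar, hmar, mul_mul_mul_comm, hPP, ← mul_mul_mul_comm]

end Tensor

theorem stmt18 {t b : ℕ} (ht : 1 ≤ t) (hb : 1 ≤ b) {W : Fin t → Type*}
    [∀ i, Fintype (W i)] [∀ i, DecidableEq (W i)]
    (G : ∀ i, SimpleGraph (W i)) (ε : ℝ) (hε0 : 0 < ε) (hε1 : ε < 1) :
    coverNum (probTensors b (disjUnion G)) l1Dist ε
      ≤ ∏ i, coverNum (probTensors b (G i)) l1Dist (ε / t) := by
  classical
  have htR : (0 : ℝ) < t := by exact_mod_cast ht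
  have hne : ∀ i : Fin t, (probTensors b (G i)).Nonempty :=
    fun i => ⟨_, uniform_mem hb (G i)⟩
  have hcov : ∀ i : Fin t, coverNum (probTensors b (G i)) l1Dist (ε / t)
      = sInf {n : ℕ∞ | ∃ C : Finset ((W i → Fin b) → ℝ),
          ↑C ⊆ probTensors b (G i) ∧ (C.card : ℕ∞) = n ∧
          ∀ a ∈ probTensors b (G i), ∃ c ∈ C, l1Dist a c ≤ ε / t} := fun i => rfl
  have hN0 : ∀ i, coverNum (probTensors b (G i)) l1Dist (ε / t) ≠ 0 := by
    intro i h0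
    rw [hcov i] at h0
    have hSne : {n : ℕ∞ | ∃ C : Finset ((W i → Fin b) → ℝ),
        ↑C ⊆ probTensors b (G i) ∧ (C.card : ℕ∞) = n ∧
        ∀ a ∈ probTensors b (G i), ∃ c ∈ C, l1Dist a c ≤ ε / t}.Nonempty := by
      by_contra hemp
      rw [Set.not_nonempty_iff_eq_empty] at hemp
      rw [hemp, sInf_empty] at h0
      simp at h0
    have hmem := csInf_mem hSne
    rw [h0] at hmem
    obtain ⟨C, hsub, hcard, hcover⟩ := hmem
    have hCempty : C = ∅ := Finset.card_eq_zero.1 (by exact_mod_cast hcard)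
    obtain ⟨T0, hT0⟩ := hne i
    obtain ⟨c, hc, -⟩ := hcover T0 hT0
    rw [hCempty] at hc
    exact absurd hc (Finset.notMem_empty c)
  by_cases htop : ∃ i, coverNum (probTensors b (G i)) l1Dist (ε / t) = ⊤
  · obtain ⟨i, hi⟩ := htop
    have hrest : (∏ j ∈ Finset.univ.erase i,
        coverNum (probTensors b (G j)) l1Dist (ε / t)) ≠ 0 := by
      rw [Finset.prod_ne_zero_iff]
      exact fun j _ => hN0 j
    calc coverNum (probTensors b (disjUnion G)) l1Dist ε ≤ ⊤ := le_top
      _ = ∏ j, coverNum (probTensors b (G j)) l1Dist (ε / t) := by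
          rw [← Finset.mul_prod_erase Finset.univ _ (Finset.mem_univ i), hi,
            ENat.top_mul hrest]
  · push_neg at htop
    have hmem : ∀ i, ∃ C : Finset ((W i → Fin b) → ℝ),
        ↑C ⊆ probTensors b (G i)
          ∧ (C.card : ℕ∞) = coverNum (probTensors b (G i)) l1Dist (ε / t)
          ∧ ∀ a ∈ probTensors b (G i), ∃ c ∈ C, l1Dist a c ≤ ε / t := by
      intro i
      have : coverNum (probTensors b (G i)) l1Dist (ε / t)
          ∈ {n : ℕ∞ | ∃ C : Finset ((W i → Fin b) → ℝ),
            ↑C ⊆ probTensors b (G i) ∧ (C.card : ℕ∞) = n ∧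
            ∀ a ∈ probTensors b (G i), ∃ c ∈ C, l1Dist a c ≤ ε / t} := by
        rw [hcov i]
        apply csInf_mem
        by_contra hemp
        rw [Set.not_nonempty_iff_eq_empty] at hemp
        exact htop i (by rw [hcov i, hemp, sInf_empty])
      exact this
    choose C hsub hcard hcover using hmem
    set Cbig : Finset (((Σ j, W j) → Fin b) → ℝ) :=
      (Fintype.piFinset C).image prodT with hCbig
    have hsubbig : ↑Cbig ⊆ probTensors b (disjUnion G) := by
      intro c hc
      rw [hCbig, Finset.coe_image] at hc
      obtain ⟨f, hf, rfl⟩ := hc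
      rw [Finset.mem_coe, Fintype.mem_piFinset] at hf
      exact prodT_mem f fun i => hsub i (hf i)
    have hcoverbig : ∀ T ∈ probTensors b (disjUnion G), ∃ c ∈ Cbig, l1Dist T c ≤ ε := by
      intro T hT
      have hdec := prodT_comp T hT
      have hchoice : ∀ i, ∃ c ∈ C i, l1Dist (comp i T) c ≤ ε / t :=
        fun i => hcover i (comp i T) (comp_mem hb i T hT)
      choose c hcmem hcdist using hchoice
      refine ⟨prodT c, ?_, ?_⟩
      · rw [hCbig, Finset.mem_image]
        exact ⟨c, Fintype.mem_piFinset.2 hcmem, rfl⟩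
      · rw [hdec]
        refine le_trans (l1_prodT _ _ (fun i => (comp_mem hb i T hT).1)
          (fun i => (comp_mem hb i T hT).2.1)
          (fun i => (hsub i (hcmem i)).1) (fun i => (hsub i (hcmem i)).2.1)) ?_
        calc ∑ i : Fin t, l1Dist (comp i T) (c i) ≤ ∑ _i : Fin t, ε / t :=
              Finset.sum_le_sum fun i _ => hcdist i
          _ = ε := by
              rw [Finset.sum_const, Finset.card_univ, Fintype.card_fin, nsmul_eq_mul]
              field_simp
    have hle : coverNum (probTensors b (disjUnion G)) l1Dist ε ≤ (Cbig.card : ℕ∞) :=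
      sInf_le ⟨Cbig, hsubbig, rfl, hcoverbig⟩
    refine le_trans hle ?_
    have hcardle : Cbig.card ≤ ∏ i, (C i).card :=
      le_trans Finset.card_image_le (le_of_eq (Fintype.card_piFinset C))
    calc (Cbig.card : ℕ∞) ≤ ((∏ i, (C i).card : ℕ) : ℕ∞) := by exact_mod_cast hcardle
      _ = ∏ i, ((C i).card : ℕ∞) := by push_cast; rfl
      _ = ∏ i, coverNum (probTensors b (G i)) l1Dist (ε / t) :=
          Finset.prod_congr rfl fun i _ => hcard i
end
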